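/- A Boolean dynamical system (B, L, θ) satisfies Condition (K) if and only if it has no cyclic maximal tails, and if and only if for every hereditary saturated ideal H of B the quotient (B/H, L, θ) satisfies Condition (L). -/

import Mathlib

/-- An ideal of a (generalized) Boolean algebra: a non-empty subset closed under
union and under intersection with arbitrary elements. -/
def IsBoolIdeal {B : Type*} [GeneralizedBooleanAlgebra B] (I : Set B) : Prop :=
  I.Nonempty ∧ (∀ a ∈ I, ∀ b ∈ I, a ⊔ b ∈ I) ∧ (∀ a ∈ I, ∀ b : B, a ⊓ b ∈ I)

/-- A filter in a (generalized) Boolean algebra. -/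
def IsBoolFilter {B : Type*} [GeneralizedBooleanAlgebra B] (ξ : Set B) : Prop :=
  ξ.Nonempty ∧ ⊥ ∉ ξ ∧ (∀ a ∈ ξ, ∀ b : B, a ≤ b → b ∈ ξ) ∧ (∀ a ∈ ξ, ∀ b ∈ ξ, a ⊓ b ∈ ξ)

/-- An ultrafilter of a (generalized) Boolean algebra. -/
def IsBoolUltrafilter {B : Type*} [GeneralizedBooleanAlgebra B] (ξ : Set B) : Prop :=
  IsBoolFilter ξ ∧ ∀ a ∈ ξ, ∀ b b' : B, a = b ⊔ b' → b ∈ ξ ∨ b' ∈ ξ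

/-- The relation `A ~ B ⟺ A ∪ A' = B ∪ B'` for some `A', B' ∈ I`. -/
def relI {B : Type*} [GeneralizedBooleanAlgebra B] (I : Set B) (a b : B) : Prop :=
  ∃ a' ∈ I, ∃ b' ∈ I, a ⊔ a' = b ⊔ b'

/-- The action of a finite word `α ∈ L*`: `θ_α = θ_{α_n} ∘ ⋯ ∘ θ_{α_1}`. -/
def wordAct {B L : Type*} (θ : L → B → B) (α : List L) (A : B) : B :=
  α.foldl (fun x a => θ a x) A

/-- `α^k`: the word `α` concatenated with itself `k` times. -/
def wordPow {L : Type*} (α : List L) (k : ℕ) : List L := (List.replicate k α).flatten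

/-- A Boolean dynamical system: a Boolean algebra `B`, a set `L`, and actions
`θ_a` on `B` (Boolean homomorphisms with `θ_a ⊥ = ⊥`) such that each word
action has compact range and closed domain. -/
structure BoolDynSys (B L : Type*) [GeneralizedBooleanAlgebra B] where
  θ : L → B → B
  map_inf : ∀ (a : L) (A A' : B), θ a (A ⊓ A') = θ a A ⊓ θ a A'
  map_sup : ∀ (a : L) (A A' : B), θ a (A ⊔ A') = θ a A ⊔ θ a A'
  map_sdiff : ∀ (a : L) (A A' : B), θ a (A \ A') = θ a A \ θ a A'
  map_bot : ∀ a : L, θ a ⊥ = ⊥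
  compactRange : ∀ α : List L, α ≠ [] → ∃ R : B, IsLUB (Set.range (wordAct θ α)) R
  closedDomain : ∀ α : List L, α ≠ [] → ∀ R : B, IsLUB (Set.range (wordAct θ α)) R →
      ∃ D : B, wordAct θ α D = R

section BDS
variable {B L : Type*} [GeneralizedBooleanAlgebra B]

/-- `Δ_A = {a ∈ L : θ_a(A) ≠ ∅}`. -/
def DeltaSet (S : BoolDynSys B L) (A : B) : Set L := {a : L | S.θ a A ≠ ⊥}

/-- `A` is regular if every non-empty `C ⊆ A` has `0 < |Δ_C| < ∞`. -/
def RegularElt (S : BoolDynSys B L) (A : B) : Prop :=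
  ∀ C : B, C ≤ A → C ≠ ⊥ → (DeltaSet S C).Finite ∧ (DeltaSet S C).Nonempty

/-- An ultrafilter cycle `(α, η)`: `θ_α(A) ∈ η` for all `A ∈ η`. -/
def IsUFCycle (S : BoolDynSys B L) (α : List L) (η : Set B) : Prop :=
  α ≠ [] ∧ IsBoolUltrafilter η ∧ ∀ A ∈ η, wordAct S.θ α A ∈ η

/-- A cycle `(α, A)`: `θ_α(C) = C` for all `C ⊆ A`. -/
def IsCycle (S : BoolDynSys B L) (α : List L) (A : B) : Prop :=
  α ≠ [] ∧ A ≠ ⊥ ∧ ∀ C : B, C ≤ A → wordAct S.θ α C = C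

/-- The cycle `(α, A)` has no exits: for all `t ≤ |α|` and all non-empty
`C ⊆ θ_{α₁⋯α_t}(A)`, `C` is regular with `Δ_C = {α_{t+1}}` (indices mod `|α|`). -/
def NoExits (S : BoolDynSys B L) (α : List L) (A : B) : Prop :=
  ∀ t : ℕ, ∀ _h1 : 1 ≤ t, ∀ h2 : t ≤ α.length, ∀ C : B, C ≠ ⊥ →
    C ≤ wordAct S.θ (α.take t) A →
    RegularElt S C ∧
      DeltaSet S C = {α.get ⟨t % α.length, Nat.mod_lt t (Nat.lt_of_lt_of_le _h1 h2)⟩}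

/-- The cycle `(α, A)` has an exit. -/
def HasExit (S : BoolDynSys B L) (α : List L) (A : B) : Prop :=
  ∃ t : ℕ, ∃ _h1 : 1 ≤ t, ∃ h2 : t ≤ α.length, ∃ C : B, C ≠ ⊥ ∧
    C ≤ wordAct S.θ (α.take t) A ∧
    DeltaSet S C ≠ {α.get ⟨t % α.length, Nat.mod_lt t (Nat.lt_of_lt_of_le _h1 h2)⟩}

/-- Condition (L): every cycle has an exit. -/
def ConditionL (S : BoolDynSys B L) : Prop :=
  ∀ (α : List L) (A : B), IsCycle S α A → HasExit S α A

/-- A hereditary subset: closed under the actions. -/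
def IsHereditary (S : BoolDynSys B L) (H : Set B) : Prop :=
  ∀ A ∈ H, ∀ a : L, S.θ a A ∈ H

/-- A saturated subset: `A ∈ H` whenever `A` is regular and `θ_a(A) ∈ H` for all `a`. -/
def IsSaturated (S : BoolDynSys B L) (H : Set B) : Prop :=
  ∀ A : B, RegularElt S A → (∀ a : L, S.θ a A ∈ H) → A ∈ H

/-- A maximal tail: conditions (T0)–(T5). -/
def IsMaximalTail (S : BoolDynSys B L) (T : Set B) : Prop :=
  T.Nonempty ∧
  (⊥ ∉ T) ∧
  (∀ A : B, ∀ a : L, S.θ a A ∈ T → A ∈ T) ∧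
  (∀ A C : B, A ⊔ C ∈ T → A ∈ T ∨ C ∈ T) ∧
  (∀ A ∈ T, ∀ C : B, A ≤ C → C ∈ T) ∧
  (∀ A ∈ T, RegularElt S A → ∃ a : L, S.θ a A ∈ T) ∧
  (∀ A₁ ∈ T, ∀ A₂ ∈ T, ∃ C ∈ T,
      (∃ α : List L, C ≤ wordAct S.θ α A₁) ∧ (∃ β : List L, C ≤ wordAct S.θ β A₂))

/-- A cyclic maximal tail. -/
def IsCyclicMaximalTail (S : BoolDynSys B L) (T : Set B) : Prop :=
  IsMaximalTail S T ∧
  ∃ (α : List L) (η : Set B) (A : B), IsUFCycle S α η ∧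
    T = {C : B | ∃ β : List L, wordAct S.θ β C ∈ η} ∧ A ∈ η ∧
    ∀ β : List L, β ≠ [] → ∀ C : B, C ≤ A → wordAct S.θ β C ∈ η →
      C ∈ η ∧ ∃ k : ℕ, 0 < k ∧ β = wordPow α k

/-- Condition (K). -/
def ConditionK (S : BoolDynSys B L) : Prop :=
  ¬ ∃ (α : List L) (η : Set B) (A : B), IsUFCycle S α η ∧ A ∈ η ∧
    ∀ β : List L, β ≠ [] → ∀ C : B, C ≤ A → wordAct S.θ β C ∈ η →
      C ∈ η ∧ ∃ k : ℕ, 0 < k ∧ β = wordPow α k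

/-! Notions for the quotient Boolean dynamical system `(B/H, L, θ)` (for a
hereditary saturated ideal `H`), expressed in terms of representatives in `B`. -/

/-- `[C] ⊆ [B']` in `B/H`. -/
def qle (H : Set B) (C A : B) : Prop := ∃ W ∈ H, C ≤ A ⊔ W

/-- `Δ_{[C]}` in `B/H`. -/
def QDelta (S : BoolDynSys B L) (H : Set B) (C : B) : Set L := {a : L | S.θ a C ∉ H}

/-- `[A]` is regular in `B/H`. -/
def QRegular (S : BoolDynSys B L) (H : Set B) (A : B) : Prop :=
  ∀ C : B, C ∉ H → qle H C A → (QDelta S H C).Finite ∧ (QDelta S H C).Nonempty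

/-- `(α, [A])` is a cycle in the quotient `(B/H, L, θ)`. -/
def QCycle (S : BoolDynSys B L) (H : Set B) (α : List L) (A : B) : Prop :=
  α ≠ [] ∧ A ∉ H ∧ ∀ C : B, qle H C A → relI H (wordAct S.θ α C) C

/-- The cycle `(α, [A])` has an exit in the quotient `(B/H, L, θ)`. -/
def QHasExit (S : BoolDynSys B L) (H : Set B) (α : List L) (A : B) : Prop :=
  ∃ t : ℕ, ∃ _h1 : 1 ≤ t, ∃ h2 : t ≤ α.length, ∃ C : B, C ∉ H ∧
    qle H C (wordAct S.θ (α.take t) A) ∧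
    QDelta S H C ≠ {α.get ⟨t % α.length, Nat.mod_lt t (Nat.lt_of_lt_of_le _h1 h2)⟩}

/-- The quotient `(B/H, L, θ)` satisfies Condition (L). -/
def QConditionL (S : BoolDynSys B L) (H : Set B) : Prop :=
  ∀ (α : List L) (A : B), QCycle S H α A → QHasExit S H α A

end BDS

section Helpers
set_option linter.unusedSectionVars false
variable {B L : Type*} [GeneralizedBooleanAlgebra B] {I H : Set B} {η : Set B}

lemma wordAct_nil (θ : L → B → B) (A : B) : wordAct θ [] A = A := rfl

lemma wordAct_cons (θ : L → B → B) (a : L) (α : List L) (A : B) :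
    wordAct θ (a :: α) A = wordAct θ α (θ a A) := rfl

lemma wordAct_append (θ : L → B → B) (α β : List L) (A : B) :
    wordAct θ (α ++ β) A = wordAct θ β (wordAct θ α A) := List.foldl_append ..

variable (S : BoolDynSys B L)

lemma wordAct_sup (α : List L) (A C : B) :
    wordAct S.θ α (A ⊔ C) = wordAct S.θ α A ⊔ wordAct S.θ α C := by
  induction α generalizing A C with
  | nil => rfl
  | cons a α ih => simp only [wordAct_cons, S.map_sup, ih]

lemma wordAct_inf (α : List L) (A C : B) :
    wordAct S.θ α (A ⊓ C) = wordAct S.θ α A ⊓ wordAct S.θ α C := by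
  induction α generalizing A C with
  | nil => rfl
  | cons a α ih => simp only [wordAct_cons, S.map_inf, ih]

lemma wordAct_sdiff (α : List L) (A C : B) :
    wordAct S.θ α (A \ C) = wordAct S.θ α A \ wordAct S.θ α C := by
  induction α generalizing A C with
  | nil => rfl
  | cons a α ih => simp only [wordAct_cons, S.map_sdiff, ih]

lemma wordAct_bot (α : List L) : wordAct S.θ α ⊥ = ⊥ := by
  induction α with
  | nil => rfl
  | cons a α ih => simp only [wordAct_cons, S.map_bot, ih]

lemma wordAct_mono (α : List L) {A C : B} (h : A ≤ C) :
    wordAct S.θ α A ≤ wordAct S.θ α C := by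
  have : wordAct S.θ α C = wordAct S.θ α A ⊔ wordAct S.θ α C := by
    rw [← wordAct_sup, sup_eq_right.2 h]
  rw [this]; exact le_sup_left

lemma ideal_bot (hI : IsBoolIdeal I) : (⊥ : B) ∈ I := by
  obtain ⟨⟨a, ha⟩, -, hinf⟩ := hI
  simpa using hinf a ha ⊥

lemma ideal_down (hI : IsBoolIdeal I) {x y : B} (h : x ≤ y) (hy : y ∈ I) : x ∈ I := by
  have := hI.2.2 y hy x
  rwa [inf_eq_right.2 h] at this

lemma relI_iff (hI : IsBoolIdeal I) {a b : B} :
    relI I a b ↔ a \ b ∈ I ∧ b \ a ∈ I := by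
  constructor
  · rintro ⟨a', ha', b', hb', h⟩
    constructor
    · refine ideal_down hI ?_ hb'
      calc a \ b ≤ (a ⊔ a') \ b := sdiff_le_sdiff_right le_sup_left
        _ = (b ⊔ b') \ b := by rw [h]
        _ ≤ b' := by simp [sup_sdiff, sdiff_le]
    · refine ideal_down hI ?_ ha'
      calc b \ a ≤ (b ⊔ b') \ a := sdiff_le_sdiff_right le_sup_left
        _ = (a ⊔ a') \ a := by rw [← h]
        _ ≤ a' := by simp [sup_sdiff, sdiff_le]
  · rintro ⟨h1, h2⟩
    exact ⟨b \ a, h2, a \ b, h1, by rw [sup_sdiff_self_right, sup_sdiff_self_right, sup_comm]⟩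

lemma wordPow_zero (α : List L) : wordPow α 0 = [] := rfl

lemma wordPow_succ (α : List L) (k : ℕ) : wordPow α (k+1) = α ++ wordPow α k := by
  simp [wordPow, List.replicate_succ]

lemma wordPow_length (α : List L) (k : ℕ) : (wordPow α k).length = k * α.length := by
  induction k with
  | zero => simp [wordPow_zero]
  | succ k ih => simp [wordPow_succ, ih, Nat.succ_mul, Nat.add_comm]

lemma wordPow_getElem (α : List L) (k t : ℕ) (ht : t < (wordPow α k).length)
    (hn : t % α.length < α.length) :
    (wordPow α k)[t] = α[t % α.length] := by
  induction k generalizing t with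
  | zero => simp [wordPow_zero] at ht
  | succ k ih =>
    simp only [wordPow_succ] at ht ⊢
    rcases lt_or_ge t α.length with h | h
    · rw [List.getElem_append_left h]
      congr 1
      exact (Nat.mod_eq_of_lt h).symm
    · rw [List.getElem_append_right h]
      have ht' : t - α.length < (wordPow α k).length := by
        simp only [List.length_append] at ht; omega
      have hn' : (t - α.length) % α.length < α.length := by
        rwa [← Nat.mod_eq_sub_mod h]
      rw [ih _ ht' hn']
      congr 1
      conv_rhs => rw [Nat.mod_eq_sub_mod h]

lemma hered_word (hHer : IsHereditary S H) {C : B} (hC : C ∈ H) (β : List L) :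
    wordAct S.θ β C ∈ H := by
  induction β generalizing C with
  | nil => exact hC
  | cons a β ih => exact ih (hHer C hC a)

lemma uf_upward (hη : IsBoolUltrafilter η) {a b : B} (ha : a ∈ η) (hab : a ≤ b) : b ∈ η :=
  hη.1.2.2.1 a ha b hab

lemma uf_inf (hη : IsBoolUltrafilter η) {a b : B} (ha : a ∈ η) (hb : b ∈ η) : a ⊓ b ∈ η :=
  hη.1.2.2.2 a ha b hb

lemma uf_not_bot (hη : IsBoolUltrafilter η) : (⊥ : B) ∉ η := hη.1.2.1

lemma uf_split (hη : IsBoolUltrafilter η) {a b c : B} (ha : a ∈ η) (h : a = b ⊔ c) :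
    b ∈ η ∨ c ∈ η := hη.2 a ha b c h

end Helpers

section Mono
variable {B L : Type*} [GeneralizedBooleanAlgebra B]
lemma theta_mono (S : BoolDynSys B L) (b : L) {x y : B} (h : x ≤ y) : S.θ b x ≤ S.θ b y := by
  have : S.θ b y = S.θ b x ⊔ S.θ b y := by rw [← S.map_sup, sup_eq_right.2 h]
  rw [this]; exact le_sup_left
end Mono
section KViol
set_option linter.unusedSectionVars false
variable {B L : Type*} [GeneralizedBooleanAlgebra B] (S : BoolDynSys B L)
variable {α : List L} {η : Set B} {A : B}

lemma ufc_pow' (huf : IsUFCycle S α η) {C : B} (hC : C ∈ η) (k : ℕ) :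
    wordAct S.θ (wordPow α k) C ∈ η := by
  induction k generalizing C with
  | zero => exact hC
  | succ k ih =>
    rw [wordPow_succ, wordAct_append]
    exact ih (huf.2.2 C hC)

/-- The tail associated with an ultrafilter. -/
def tailOf (S : BoolDynSys B L) (η : Set B) : Set B :=
  {C : B | ∃ β : List L, wordAct S.θ β C ∈ η}

/-- Complement of the tail. -/
def Hof (S : BoolDynSys B L) (η : Set B) : Set B :=
  {C : B | ∀ β : List L, wordAct S.θ β C ∉ η}

lemma Hof_ideal (huf : IsUFCycle S α η) : IsBoolIdeal (Hof S η) := by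
  obtain ⟨hne, hη, hcyc⟩ := huf
  refine ⟨⟨⊥, fun β => by rw [wordAct_bot]; exact uf_not_bot hη⟩, ?_, ?_⟩
  · intro a ha b hb β hβ
    rw [wordAct_sup] at hβ
    rcases uf_split hη hβ rfl with h | h
    · exact ha β h
    · exact hb β h
  · intro a ha b β hβ
    rw [wordAct_inf] at hβ
    exact ha β (uf_upward hη hβ inf_le_left)

lemma Hof_hered : IsHereditary S (Hof S η) := by
  intro C hC a β hβ
  exact hC (a :: β) hβ

lemma Hof_sat (huf : IsUFCycle S α η) : IsSaturated S (Hof S η) := by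
  intro C _ hall β hβ
  match β with
  | [] =>
    have h2 : wordAct S.θ α C ∈ η := huf.2.2 C hβ
    obtain ⟨a, α', rfl⟩ : ∃ a α', α = a :: α' := by
      cases α with
      | nil => exact absurd rfl huf.1
      | cons a α' => exact ⟨a, α', rfl⟩
    exact hall a α' h2
  | a :: β' => exact hall a β' hβ

end KViol
section KV2
set_option linter.unusedSectionVars false
variable {B L : Type*} [GeneralizedBooleanAlgebra B] {S : BoolDynSys B L}
variable {α : List L} {η : Set B} {A : B}

lemma Kviol_sdiff1 (huf : IsUFCycle S α η)
    (hprop : ∀ β : List L, β ≠ [] → ∀ C : B, C ≤ A → wordAct S.θ β C ∈ η →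
      C ∈ η ∧ ∃ k : ℕ, 0 < k ∧ β = wordPow α k)
    {C : B} (hC : C ≤ A) : wordAct S.θ α C \ C ∈ Hof S η := by
  intro β hβ
  have hη := huf.2.1
  rw [wordAct_sdiff, ← wordAct_append] at hβ
  have h1 : wordAct S.θ (α ++ β) C ∈ η := uf_upward hη hβ sdiff_le
  obtain ⟨hCη, k, hk0, hkeq⟩ := hprop (α ++ β) (by simp [huf.1]) C hC h1
  obtain ⟨k, rfl⟩ : ∃ k', k = k' + 1 := ⟨k - 1, by omega⟩
  rw [wordPow_succ] at hkeq
  have hβeq : β = wordPow α k := by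
    exact List.append_cancel_left hkeq
  have h2 : wordAct S.θ β C ∈ η := hβeq ▸ ufc_pow' S huf hCη k
  have h3 := uf_inf hη hβ h2
  rw [inf_sdiff_self_left] at h3
  exact uf_not_bot hη h3

lemma Kviol_sdiff2 (huf : IsUFCycle S α η)
    (hprop : ∀ β : List L, β ≠ [] → ∀ C : B, C ≤ A → wordAct S.θ β C ∈ η →
      C ∈ η ∧ ∃ k : ℕ, 0 < k ∧ β = wordPow α k)
    {C : B} (hC : C ≤ A) : C \ wordAct S.θ α C ∈ Hof S η := by
  intro β hβ
  have hη := huf.2.1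
  have hCeta : C \ wordAct S.θ α C ∈ η := by
    by_cases hne : β = []
    · subst hne; exact hβ
    · exact (hprop β hne _ (le_trans sdiff_le hC) hβ).1
  have hCη : C ∈ η := uf_upward hη hCeta sdiff_le
  have h2 : wordAct S.θ α C ∈ η := huf.2.2 C hCη
  have h3 := uf_inf hη hCeta h2
  rw [inf_sdiff_self_left] at h3
  exact uf_not_bot hη h3

lemma Kviol_qcycle (huf : IsUFCycle S α η) (hA : A ∈ η)
    (hprop : ∀ β : List L, β ≠ [] → ∀ C : B, C ≤ A → wordAct S.θ β C ∈ η →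
      C ∈ η ∧ ∃ k : ℕ, 0 < k ∧ β = wordPow α k) :
    QCycle S (Hof S η) α A := by
  have hI := Hof_ideal S huf
  refine ⟨huf.1, fun h => h [] hA, ?_⟩
  rintro C ⟨W, hW, hle⟩
  rw [relI_iff hI]
  set C₀ := C ⊓ A with hC₀
  have hsplit : C₀ ⊔ C \ A = C := sup_inf_sdiff C A
  have hD' : C \ A ∈ Hof S η := ideal_down hI (by
    calc C \ A ≤ (A ⊔ W) \ A := sdiff_le_sdiff_right hle
      _ ≤ W := by simp [sup_sdiff, sdiff_le]) hW
  have hC₀A : C₀ ≤ A := inf_le_right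
  constructor
  · refine ideal_down hI ?_ (hI.2.1 _ (Kviol_sdiff1 huf hprop hC₀A) _
      (hered_word S (Hof_hered S) hD' α))
    calc wordAct S.θ α C \ C = wordAct S.θ α (C₀ ⊔ C \ A) \ C := by rw [hsplit]
      _ = (wordAct S.θ α C₀ ⊔ wordAct S.θ α (C \ A)) \ C := by rw [wordAct_sup]
      _ ≤ (wordAct S.θ α C₀ \ C) ⊔ wordAct S.θ α (C \ A) := by
          rw [sup_sdiff]; exact sup_le_sup_left sdiff_le _
      _ ≤ (wordAct S.θ α C₀ \ C₀) ⊔ wordAct S.θ α (C \ A) :=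
          sup_le_sup_right (sdiff_le_sdiff_left (hsplit ▸ le_sup_left)) _
  · refine ideal_down hI ?_ (hI.2.1 _ (Kviol_sdiff2 huf hprop hC₀A) _ hD')
    calc C \ wordAct S.θ α C = (C₀ ⊔ C \ A) \ wordAct S.θ α C := by rw [hsplit]
      _ ≤ (C₀ \ wordAct S.θ α C) ⊔ C \ A := by
          rw [sup_sdiff]; exact sup_le_sup_left sdiff_le _
      _ ≤ (C₀ \ wordAct S.θ α C₀) ⊔ C \ A :=
          sup_le_sup_right (sdiff_le_sdiff_left (wordAct_mono S α inf_le_left)) _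

end KV2
section KV3
set_option linter.unusedSectionVars false
variable {B L : Type*} [GeneralizedBooleanAlgebra B] {S : BoolDynSys B L}
variable {α : List L} {η : Set B} {A : B}

/-- Any nonempty word that sends `C` into `η` must start with the designated letter. -/
lemma Kviol_head (huf : IsUFCycle S α η) (hA : A ∈ η)
    (hprop : ∀ β : List L, β ≠ [] → ∀ C : B, C ≤ A → wordAct S.θ β C ∈ η →
      C ∈ η ∧ ∃ k : ℕ, 0 < k ∧ β = wordPow α k)
    {t : ℕ} (h1 : 1 ≤ t) (h2 : t ≤ α.length)
    {C : B} (hqle : qle (Hof S η) C (wordAct S.θ (α.take t) A))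
    {c : L} {δ' : List L} (hδ : wordAct S.θ (c :: δ') C ∈ η) :
    c = α[t % α.length]'(Nat.mod_lt t (Nat.lt_of_lt_of_le h1 h2)) := by
  have hη := huf.2.1
  obtain ⟨W, hW, hle⟩ := hqle
  set δ : List L := c :: δ' with hδdef
  set At := wordAct S.θ (α.take t) A with hAt
  have hsplit : C ⊓ At ⊔ C \ At = C := sup_inf_sdiff C At
  have hWH : C \ At ∈ Hof S η := by
    refine ideal_down (Hof_ideal S huf) ?_ hW
    calc C \ At ≤ (At ⊔ W) \ At := sdiff_le_sdiff_right hle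
      _ ≤ W := by simp [sup_sdiff, sdiff_le]
  have hδC₀ : wordAct S.θ δ (C ⊓ At) ∈ η := by
    have := hδ
    rw [← hsplit, wordAct_sup] at this
    rcases uf_split hη this rfl with h | h
    · exact h
    · exact absurd h (hWH δ)
  have hup : wordAct S.θ (α.take t ++ δ) A ∈ η := by
    rw [wordAct_append]
    exact uf_upward hη hδC₀ (wordAct_mono S δ inf_le_right)
  obtain ⟨-, k, hk0, hkeq⟩ := hprop (α.take t ++ δ) (by simp [hδdef]) A le_rfl hup
  have htt : (α.take t).length = t := by
    rw [List.length_take]; omega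
  have hlen : t + δ.length = k * α.length := by
    have := congrArg List.length hkeq
    rw [List.length_append, htt, wordPow_length] at this
    exact this
  have htlt : t < (wordPow α k).length := by
    rw [wordPow_length, ← hlen]
    have : 0 < δ.length := by simp [hδdef]
    omega
  have hmod : t % α.length < α.length := Nat.mod_lt t (Nat.lt_of_lt_of_le h1 h2)
  have hpos : t < (List.take t α ++ δ).length := by
    rw [List.length_append, htt, hδdef, List.length_cons]; omega
  have hget : (List.take t α ++ δ)[t]'hpos = c := by
    rw [List.getElem_append_right (by omega : (List.take t α).length ≤ t)]
    simp [htt, hδdef]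
  have hg2 : (List.take t α ++ δ)[t]'hpos = (wordPow α k)[t]'htlt :=
    List.getElem_of_eq hkeq hpos
  rw [← hget, hg2, wordPow_getElem α k t htlt hmod]

lemma Kviol_noexit (huf : IsUFCycle S α η) (hA : A ∈ η)
    (hprop : ∀ β : List L, β ≠ [] → ∀ C : B, C ≤ A → wordAct S.θ β C ∈ η →
      C ∈ η ∧ ∃ k : ℕ, 0 < k ∧ β = wordPow α k) :
    ¬ QHasExit S (Hof S η) α A := by
  rintro ⟨t, h1, h2, C, hCH, hqle, hne'⟩
  apply hne'
  ext a
  simp only [Set.mem_setOf_eq, Set.mem_singleton_iff, QDelta, List.get_eq_getElem]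
  constructor
  · intro haH
    simp only [Hof, Set.mem_setOf_eq, not_forall, not_not] at haH
    obtain ⟨β', hβ'⟩ := haH
    exact Kviol_head huf hA hprop h1 h2 hqle
      (show wordAct S.θ (a :: β') C ∈ η from hβ')
  · rintro rfl
    simp only [Hof, Set.mem_setOf_eq, not_forall, not_not] at hCH ⊢
    obtain ⟨γ, hγ⟩ := hCH
    have hδ : ∃ δ : List L, δ ≠ [] ∧ wordAct S.θ δ C ∈ η := by
      cases γ with
      | nil => exact ⟨α, huf.1, huf.2.2 C hγ⟩
      | cons c γ' => exact ⟨c :: γ', by simp, hγ⟩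
    obtain ⟨δ, hδne, hδη⟩ := hδ
    obtain ⟨c, δ', rfl⟩ := List.exists_cons_of_ne_nil hδne
    have hc := Kviol_head huf hA hprop h1 h2 hqle hδη
    exact ⟨δ', by rw [← hc]; exact hδη⟩

end KV3
section KV4
set_option linter.unusedSectionVars false
variable {B L : Type*} [GeneralizedBooleanAlgebra B] {S : BoolDynSys B L}
variable {α : List L} {η : Set B} {A : B}

lemma Kviol_tail (huf : IsUFCycle S α η) (hA : A ∈ η) :
    IsMaximalTail S (tailOf S η) := by
  have hη := huf.2.1
  refine ⟨⟨A, [], hA⟩, ?_, ?_, ?_, ?_, ?_, ?_⟩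
  · rintro ⟨β, hβ⟩
    rw [wordAct_bot] at hβ
    exact uf_not_bot hη hβ
  · rintro X a ⟨β, hβ⟩
    exact ⟨a :: β, hβ⟩
  · rintro X C ⟨β, hβ⟩
    rw [wordAct_sup] at hβ
    rcases uf_split hη hβ rfl with h | h
    · exact Or.inl ⟨β, h⟩
    · exact Or.inr ⟨β, h⟩
  · rintro X ⟨β, hβ⟩ C hle
    exact ⟨β, uf_upward hη hβ (wordAct_mono S β hle)⟩
  · rintro X ⟨β, hβ⟩ -
    cases β with
    | nil =>
      obtain ⟨a, α', hα⟩ : ∃ a α', α = a :: α' := by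
        cases α with
        | nil => exact absurd rfl huf.1
        | cons a α' => exact ⟨a, α', rfl⟩
      have h2 : wordAct S.θ α X ∈ η := huf.2.2 X hβ
      rw [hα] at h2
      exact ⟨a, α', h2⟩
    | cons a β' => exact ⟨a, β', hβ⟩
  · rintro A₁ ⟨β₁, h₁⟩ A₂ ⟨β₂, h₂⟩
    refine ⟨wordAct S.θ β₁ A₁ ⊓ wordAct S.θ β₂ A₂, ⟨[], uf_inf hη h₁ h₂⟩,
      ⟨β₁, inf_le_left⟩, ⟨β₂, inf_le_right⟩⟩

lemma Kviol_cyclicTail (huf : IsUFCycle S α η) (hA : A ∈ η)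
    (hprop : ∀ β : List L, β ≠ [] → ∀ C : B, C ≤ A → wordAct S.θ β C ∈ η →
      C ∈ η ∧ ∃ k : ℕ, 0 < k ∧ β = wordPow α k) :
    IsCyclicMaximalTail S (tailOf S η) :=
  ⟨Kviol_tail huf hA, α, η, A, huf, rfl, hA, hprop⟩

end KV4
section Comb
set_option linter.unusedSectionVars false
variable {L : Type*}

/-- The `j`-th letter of the infinite word `ααα⋯`. -/
def sLetter (α : List L) (hα : α ≠ []) (j : ℕ) : L :=
  α[j % α.length]'(Nat.mod_lt _ (List.length_pos_iff.2 hα))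

/-- The length-`m` prefix of the infinite word `ααα⋯`. -/
def sigmaW (α : List L) (hα : α ≠ []) (m : ℕ) : List L :=
  (List.range m).map (sLetter α hα)

/-- Position in `[1, n]` congruent to `j` mod `n`. -/
def posOf (n j : ℕ) : ℕ := if j % n = 0 then n else j % n

variable {α : List L} (hα : α ≠ [])

lemma posOf_pos {n : ℕ} (hn : 0 < n) (j : ℕ) : 1 ≤ posOf n j := by
  unfold posOf; split <;> omega

lemma posOf_le {n : ℕ} (hn : 0 < n) (j : ℕ) : posOf n j ≤ n := by
  unfold posOf; split
  · omega
  · exact le_of_lt (Nat.mod_lt _ hn)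

lemma posOf_mod {n : ℕ} (hn : 0 < n) (j : ℕ) : posOf n j % n = j % n := by
  unfold posOf; split
  · simp_all [Nat.mod_self]
  · exact Nat.mod_eq_of_lt (Nat.mod_lt _ hn)

lemma sigmaW_length (m : ℕ) : (sigmaW α hα m).length = m := by simp [sigmaW]

lemma sigmaW_zero : sigmaW α hα 0 = [] := rfl

lemma sigmaW_getElem (m j : ℕ) (hj : j < (sigmaW α hα m).length) :
    (sigmaW α hα m)[j] = sLetter α hα j := by
  simp [sigmaW]

lemma sigmaW_self : sigmaW α hα α.length = α := by
  apply List.ext_getElem (by simp [sigmaW_length])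
  intro j h1 h2
  rw [sigmaW_getElem]
  unfold sLetter
  congr 1
  exact Nat.mod_eq_of_lt h2

lemma sigmaW_append {a : ℕ} (hPer : ∀ j, sLetter α hα (j + a) = sLetter α hα j) (b : ℕ) :
    sigmaW α hα (a + b) = sigmaW α hα a ++ sigmaW α hα b := by
  unfold sigmaW
  rw [List.range_add, List.map_append, List.map_map]
  congr 1
  apply List.map_congr_left
  intro i _
  simp only [Function.comp_apply]
  rw [Nat.add_comm a i, hPer i]

lemma per_n : ∀ j, sLetter α hα (j + α.length) = sLetter α hα j := by
  intro j
  unfold sLetter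
  congr 1
  exact Nat.add_mod_right _ _

lemma per_mul {d : ℕ} (hPer : ∀ j, sLetter α hα (j + d) = sLetter α hα j) (q : ℕ) :
    ∀ j, sLetter α hα (j + q * d) = sLetter α hα j := by
  induction q with
  | zero => simp
  | succ q ih =>
    intro j
    have : j + (q + 1) * d = (j + d) + q * d := by ring
    rw [this, ih, hPer]

lemma per_sub {m d q r : ℕ} (hPer : ∀ j, sLetter α hα (j + m) = sLetter α hα j)
    (hPerqd : ∀ j, sLetter α hα (j + q * d) = sLetter α hα j)
    (hm : m = q * d + r) : ∀ j, sLetter α hα (j + r) = sLetter α hα j := by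
  intro j
  have := hPerqd (j + r)
  rw [show j + r + q * d = j + m by omega] at this
  rw [← this, hPer]

lemma sigmaW_pow {d : ℕ} (hPer : ∀ j, sLetter α hα (j + d) = sLetter α hα j) (q : ℕ) :
    wordPow (sigmaW α hα d) q = sigmaW α hα (q * d) := by
  induction q with
  | zero => simp [wordPow_zero, sigmaW_zero]
  | succ q ih =>
    rw [wordPow_succ, ih, ← sigmaW_append hα hPer, Nat.add_comm]
    congr 1
    ring

end Comb
section Track
set_option linter.unusedSectionVars false
variable {B L : Type*} [GeneralizedBooleanAlgebra B] {S : BoolDynSys B L}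
variable {H : Set B} {α : List L} {A : B} (hα : α ≠ [])

lemma noexit_elim (hnoex : ¬ QHasExit S H α A) {t : ℕ} (h1 : 1 ≤ t) (h2 : t ≤ α.length)
    {C : B} (hC : C ∉ H) (hq : qle H C (wordAct S.θ (α.take t) A)) :
    QDelta S H C = {α.get ⟨t % α.length, Nat.mod_lt t (Nat.lt_of_lt_of_le h1 h2)⟩} := by
  by_contra hne
  exact hnoex ⟨t, h1, h2, C, hC, hq, hne⟩

lemma qle_mono {C D E : B} (hCD : C ≤ D) (h : qle H D E) : qle H C E := by
  obtain ⟨W, hW, hle⟩ := h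
  exact ⟨W, hW, le_trans hCD hle⟩

lemma qle_pos_zero (hI : IsBoolIdeal H) (hcyc : QCycle S H α A) {C : B} (hC : C ≤ A) :
    qle H C (wordAct S.θ (α.take (posOf α.length 0)) A) := by
  have hn : 0 < α.length := List.length_pos_iff.2 hcyc.1
  have hpos : posOf α.length 0 = α.length := by unfold posOf; simp
  rw [hpos, List.take_length]
  have hrel := hcyc.2.2 A ⟨⊥, ideal_bot hI, by simp⟩
  rw [relI_iff hI] at hrel
  exact ⟨A \ wordAct S.θ α A, hrel.2, le_trans hC (by rw [sup_comm]; exact le_sdiff_sup)⟩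

lemma take_one_eq (hn : 0 < α.length) : α.take 1 = [α[0]] := by
  apply List.ext_getElem (by simp; omega)
  intro j h1 h2
  simp only [List.length_take] at h1
  have : j = 0 := by omega
  subst this
  simp

lemma step_lemma (hI : IsBoolIdeal H) (hHer : IsHereditary S H)
    (hcyc : QCycle S H α A) (hnoex : ¬ QHasExit S H α A)
    {D : B} (hD : D ∉ H) {u : ℕ}
    (hq : qle H D (wordAct S.θ (α.take (posOf α.length u)) A)) :
    QDelta S H D = {sLetter α hα u} ∧
    qle H (S.θ (sLetter α hα u) D) (wordAct S.θ (α.take (posOf α.length (u+1))) A) := by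
  have hn : 0 < α.length := List.length_pos_iff.2 hα
  set n := α.length with hndef
  have h1 := posOf_pos hn u
  have h2 := posOf_le hn u
  have hQD := noexit_elim hnoex h1 h2 hD hq
  have hQD' : QDelta S H D = {sLetter α hα u} := by
    rw [hQD]
    congr 1
    simp only [List.get_eq_getElem]
    unfold sLetter
    congr 1
    exact posOf_mod hn u
  refine ⟨hQD', ?_⟩
  obtain ⟨W, hW, hle⟩ := hq
  set b := sLetter α hα u with hbdef
  by_cases hu : u % n = 0
  · -- at position n; wrap around using the cycle relation
    have hpu : posOf n u = n := by unfold posOf; simp [hu]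
    have hmod1 : (u + 1) % n = 1 % n := by
      conv_lhs => rw [Nat.add_mod, hu]
      simp [Nat.mod_mod_of_dvd]
    have hpu1 : posOf n (u + 1) = 1 := by
      by_cases h1n : n = 1
      · unfold posOf
        rw [hmod1, h1n]
        simp
      · have h1n' : 1 % n = 1 := Nat.mod_eq_of_lt (by omega)
        unfold posOf
        rw [hmod1, h1n']
        simp
    have hbA : S.θ b A = wordAct S.θ (α.take 1) A := by
      rw [take_one_eq hn]
      have : b = α[0] := by
        rw [hbdef]; unfold sLetter; congr 1
      rw [this]; rfl
    have hrel := hcyc.2.2 A ⟨⊥, ideal_bot hI, by simp⟩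
    rw [relI_iff hI] at hrel
    have h3 : D ≤ wordAct S.θ α A ⊔ W := by rwa [hpu, List.take_length] at hle
    have hkey : S.θ b D ≤ wordAct S.θ (α.take 1) A ⊔ (S.θ b (wordAct S.θ α A \ A) ⊔ S.θ b W) := by
      calc S.θ b D ≤ S.θ b (wordAct S.θ α A ⊔ W) := theta_mono S b h3
        _ = S.θ b (wordAct S.θ α A) ⊔ S.θ b W := S.map_sup ..
        _ ≤ S.θ b (A ⊔ wordAct S.θ α A \ A) ⊔ S.θ b W :=
            sup_le_sup_right (theta_mono S b (by rw [sup_comm]; exact le_sdiff_sup)) _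
        _ = (S.θ b A ⊔ S.θ b (wordAct S.θ α A \ A)) ⊔ S.θ b W := by rw [S.map_sup]
        _ = wordAct S.θ (α.take 1) A ⊔ (S.θ b (wordAct S.θ α A \ A) ⊔ S.θ b W) := by
            rw [hbA, sup_assoc]
    refine ⟨S.θ b (wordAct S.θ α A \ A) ⊔ S.θ b W,
      hI.2.1 _ (hHer _ hrel.1 b) _ (hHer _ hW b), by rwa [hpu1]⟩
  · -- at position u % n < n; just extend the prefix
    have hpu : posOf n u = u % n := by unfold posOf; simp [hu]
    have hum : u % n < n := Nat.mod_lt _ hn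
    have hmod1 : (u + 1) % n = (u % n + 1) % n := by
      conv_lhs => rw [Nat.add_mod]
      by_cases h1n : n = 1
      · omega
      · rw [Nat.mod_eq_of_lt (show 1 < n by omega)]
    have hpu1 : posOf n (u + 1) = u % n + 1 := by
      unfold posOf
      rcases Nat.eq_or_lt_of_le (Nat.succ_le_of_lt hum) with h | h
      · have hh : u % n + 1 = n := by omega
        rw [hmod1, hh]
        simp [Nat.mod_self]
      · have h' : u % n + 1 < n := by omega
        rw [hmod1, Nat.mod_eq_of_lt h']
        simp
    have hb2 : b = α[u % n]'hum := by rw [hbdef]; unfold sLetter; rfl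
    have htake : α.take (u % n) ++ [b] = α.take (u % n + 1) := by
      rw [List.take_succ]
      congr 1
      rw [List.getElem?_eq_getElem hum, hb2]
      rfl
    have hle' : D ≤ wordAct S.θ (α.take (u % n)) A ⊔ W := by rwa [hpu] at hle
    have hkey : S.θ b D ≤ wordAct S.θ (α.take (u % n + 1)) A ⊔ S.θ b W := by
      calc S.θ b D ≤ S.θ b (wordAct S.θ (α.take (u % n)) A ⊔ W) := theta_mono S b hle'
        _ = S.θ b (wordAct S.θ (α.take (u % n)) A) ⊔ S.θ b W := S.map_sup ..
        _ = wordAct S.θ (α.take (u % n) ++ [b]) A ⊔ S.θ b W := by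
            rw [wordAct_append]; rfl
        _ = wordAct S.θ (α.take (u % n + 1)) A ⊔ S.θ b W := by rw [htake]
    exact ⟨S.θ b W, hHer _ hW b, by rwa [hpu1]⟩

end Track
section Track2
set_option linter.unusedSectionVars false
variable {B L : Type*} [GeneralizedBooleanAlgebra B] {S : BoolDynSys B L}
variable {H : Set B} {α : List L} {A : B} (hα : α ≠ [])

lemma track_lemma (hI : IsBoolIdeal H) (hHer : IsHereditary S H)
    (hcyc : QCycle S H α A) (hnoex : ¬ QHasExit S H α A) :
    ∀ (β : List L) (u : ℕ) (D : B), wordAct S.θ β D ∉ H →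
      qle H D (wordAct S.θ (α.take (posOf α.length u)) A) →
      (∀ j (hj : j < β.length), β[j] = sLetter α hα (u + j)) ∧
      qle H (wordAct S.θ β D) (wordAct S.θ (α.take (posOf α.length (u + β.length))) A) := by
  intro β
  induction β with
  | nil =>
    intro u D hD hq
    exact ⟨fun j hj => absurd hj (by simp), by simpa [wordAct_nil] using hq⟩
  | cons b β' ih =>
    intro u D hD hq
    have hD0 : D ∉ H := fun h => hD (hered_word S hHer h _)
    have hstep := step_lemma hα hI hHer hcyc hnoex hD0 hq
    have hbD : S.θ b D ∉ H := fun h => hD (hered_word S hHer h β')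
    have hb : b = sLetter α hα u := by
      have : b ∈ QDelta S H D := hbD
      rw [hstep.1] at this
      exact this
    have hq' : qle H (S.θ b D) (wordAct S.θ (α.take (posOf α.length (u+1))) A) := by
      rw [hb]; exact hstep.2
    obtain ⟨hget, hqle⟩ := ih (u+1) (S.θ b D) hD hq'
    constructor
    · intro j hj
      cases j with
      | zero => simpa using hb
      | succ j =>
        have hj' : j < β'.length := by simpa using hj
        have := hget j hj'
        simpa [Nat.add_comm, Nat.add_assoc, Nat.add_left_comm] using this
    · have : u + (b :: β').length = (u + 1) + β'.length := by simp; omega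
      rw [this]
      exact hqle

lemma track2_lemma (hI : IsBoolIdeal H) (hHer : IsHereditary S H)
    (hcyc : QCycle S H α A) (hnoex : ¬ QHasExit S H α A) :
    ∀ (j : ℕ) (u v : ℕ) (D : B), D ∉ H →
      qle H D (wordAct S.θ (α.take (posOf α.length u)) A) →
      qle H D (wordAct S.θ (α.take (posOf α.length v)) A) →
      sLetter α hα (u + j) = sLetter α hα (v + j) := by
  intro j
  induction j with
  | zero =>
    intro u v D hD hqu hqv
    have h1 := (step_lemma hα hI hHer hcyc hnoex hD hqu).1
    have h2 := (step_lemma hα hI hHer hcyc hnoex hD hqv).1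
    have := h1.symm.trans h2
    simpa using Set.singleton_eq_singleton_iff.1 this
  | succ j ih =>
    intro u v D hD hqu hqv
    have h1 := step_lemma hα hI hHer hcyc hnoex hD hqu
    have h2 := step_lemma hα hI hHer hcyc hnoex hD hqv
    have hb : sLetter α hα u = sLetter α hα v := by
      have := h1.1.symm.trans h2.1
      simpa using Set.singleton_eq_singleton_iff.1 this
    set b := sLetter α hα u with hbdef
    have hbD : S.θ b D ∉ H := by
      intro h
      have : b ∈ QDelta S H D := by rw [h1.1]; rfl
      exact this h
    have hq2' : qle H (S.θ b D) (wordAct S.θ (α.take (posOf α.length (v+1))) A) := by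
      show qle H (S.θ b D) _
      rw [hb]; exact h2.2
    have := ih (u+1) (v+1) (S.θ b D) hbD h1.2 hq2'
    simpa [Nat.add_comm, Nat.add_assoc, Nat.add_left_comm] using this

end Track2
section Eta
set_option linter.unusedSectionVars false
variable {B L : Type*} [GeneralizedBooleanAlgebra B]

lemma exists_eta {H : Set B} (hI : IsBoolIdeal H) {A : B} (hA : A ∉ H) :
    ∃ η : Set B, IsBoolUltrafilter η ∧ A ∈ η ∧ (∀ x ∈ η, x ∉ H) ∧
      (∀ C : B, C ∉ η → ∃ e ∈ η, e ⊓ C ∈ H) := by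
  set S0 : Set (Set B) := {ξ | IsBoolFilter ξ ∧ A ∈ ξ ∧ ∀ x ∈ ξ, x ∉ H} with hS0
  have hbase : Set.Ici A ∈ S0 := by
    refine ⟨⟨⟨A, le_rfl⟩, ?_, ?_, ?_⟩, le_rfl, ?_⟩
    · intro hbot
      exact hA (by rw [le_bot_iff.1 hbot]; exact ideal_bot hI)
    · intro a ha b hab; exact le_trans ha hab
    · intro a ha b hb; exact le_inf ha hb
    · intro x hx hxH
      exact hA (ideal_down hI hx hxH)
  have hchain_cond : ∀ c ⊆ S0, IsChain (fun x1 x2 => x1 ⊆ x2) c → c.Nonempty →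
      ∃ ub ∈ S0, ∀ s ∈ c, s ⊆ ub := by
    intro c hc hchain hne
    refine ⟨⋃₀ c, ⟨⟨?_, ?_, ?_, ?_⟩, ?_, ?_⟩, fun s hs => Set.subset_sUnion_of_mem hs⟩
    · obtain ⟨ξ, hξ⟩ := hne
      obtain ⟨x, hx⟩ := (hc hξ).1.1
      exact ⟨x, ξ, hξ, hx⟩
    · rintro ⟨ξ, hξ, hbot⟩
      exact (hc hξ).1.2.1 hbot
    · rintro a ⟨ξ, hξ, ha⟩ b hab
      exact ⟨ξ, hξ, (hc hξ).1.2.2.1 a ha b hab⟩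
    · rintro a ⟨ξ, hξ, ha⟩ b ⟨ξ', hξ', hb⟩
      rcases IsChain.total hchain hξ hξ' with h | h
      · exact ⟨ξ', hξ', (hc hξ').1.2.2.2 a (h ha) b hb⟩
      · exact ⟨ξ, hξ, (hc hξ).1.2.2.2 a ha b (h hb)⟩
    · obtain ⟨ξ, hξ⟩ := hne
      exact ⟨ξ, hξ, (hc hξ).2.1⟩
    · rintro x ⟨ξ, hξ, hx⟩
      exact (hc hξ).2.2 x hx
  obtain ⟨η, hηbase, hηmax⟩ := zorn_subset_nonempty S0 hchain_cond _ hbase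
  obtain ⟨⟨hηne, hηbot, hηup, hηinf⟩, hηA, hηH⟩ := hηmax.1
  have hmaxprop : ∀ C : B, C ∉ η → ∃ e ∈ η, e ⊓ C ∈ H := by
    intro C hC
    by_contra hcon
    push_neg at hcon
    set gen : Set B := {y | ∃ e ∈ η, e ⊓ C ≤ y} with hgen
    have hgenS0 : gen ∈ S0 := by
      refine ⟨⟨⟨C, A, hηA, inf_le_right⟩, ?_, ?_, ?_⟩, ⟨A, hηA, inf_le_left⟩, ?_⟩
      · rintro ⟨e, he, hbot⟩
        exact hcon e he (ideal_down hI hbot (ideal_bot hI))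
      · rintro a ⟨e, he, hle⟩ b hab
        exact ⟨e, he, le_trans hle hab⟩
      · rintro a ⟨e, he, hle⟩ b ⟨e', he', hle'⟩
        refine ⟨e ⊓ e', hηinf e he e' he', ?_⟩
        calc (e ⊓ e') ⊓ C ≤ (e ⊓ C) ⊓ (e' ⊓ C) := by
              apply le_inf
              · exact inf_le_inf_right _ inf_le_left
              · exact inf_le_inf_right _ inf_le_right
          _ ≤ a ⊓ b := inf_le_inf hle hle'
      · rintro x ⟨e, he, hle⟩ hxH
        exact hcon e he (ideal_down hI hle hxH)
    have hsub : η ⊆ gen := fun y hy => ⟨y, hy, inf_le_left⟩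
    have : gen ⊆ η := hηmax.2 hgenS0 hsub
    exact hC (this ⟨A, hηA, inf_le_right⟩)
  refine ⟨η, ⟨⟨hηne, hηbot, hηup, hηinf⟩, ?_⟩, hηA, hηH, hmaxprop⟩
  intro a ha b b' hab
  by_contra hcon
  push_neg at hcon
  obtain ⟨e, he, heH⟩ := hmaxprop b hcon.1
  obtain ⟨e', he', heH'⟩ := hmaxprop b' hcon.2
  have hmem : (e ⊓ e') ⊓ a ∈ η := hηinf _ (hηinf e he e' he') a ha
  have : (e ⊓ e') ⊓ a ∈ H := by
    have hdist : (e ⊓ e') ⊓ a = ((e ⊓ e') ⊓ b) ⊔ ((e ⊓ e') ⊓ b') := by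
      rw [hab, inf_sup_left]
    rw [hdist]
    refine hI.2.1 _ ?_ _ ?_
    · exact ideal_down hI (by exact inf_le_inf_right _ inf_le_left) heH
    · exact ideal_down hI (by exact inf_le_inf_right _ inf_le_right) heH'
  exact hηH _ hmem this

end Eta
section Final
set_option linter.unusedSectionVars false
variable {B L : Type*} [GeneralizedBooleanAlgebra B] {S : BoolDynSys B L}

lemma noexit_gives_Kviol {H : Set B} (hI : IsBoolIdeal H) (hHer : IsHereditary S H)
    {α : List L} {A : B} (hcyc : QCycle S H α A) (hnoex : ¬ QHasExit S H α A) :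
    ∃ (α' : List L) (η : Set B) (A' : B), IsUFCycle S α' η ∧ A' ∈ η ∧
      ∀ β : List L, β ≠ [] → ∀ C : B, C ≤ A' → wordAct S.θ β C ∈ η →
        C ∈ η ∧ ∃ k : ℕ, 0 < k ∧ β = wordPow α' k := by
  obtain ⟨hα, hAH, hrelall⟩ := hcyc
  have hcyc : QCycle S H α A := ⟨hα, hAH, hrelall⟩
  have hn : 0 < α.length := List.length_pos_iff.2 hα
  obtain ⟨η, hη, hA, hdisj, hmaxp⟩ := exists_eta hI hAH
  -- θ_α preserves η below A
  have halpha : ∀ X ∈ η, wordAct S.θ α (X ⊓ A) ∈ η := by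
    intro X hX
    have hXA : X ⊓ A ∈ η := uf_inf hη hX hA
    have hrel := hrelall (X ⊓ A) ⟨⊥, ideal_bot hI, by simp⟩
    rw [relI_iff hI] at hrel
    have hsplit : X ⊓ A = (X ⊓ A) ⊓ wordAct S.θ α (X ⊓ A) ⊔ (X ⊓ A) \ wordAct S.θ α (X ⊓ A) :=
      (sup_inf_sdiff _ _).symm
    rcases uf_split hη hXA hsplit with h | h
    · exact uf_upward hη h inf_le_right
    · exact absurd hrel.2 (hdisj _ h)
  set Mstar : Set ℕ := {m | 0 < m ∧ ∀ X ∈ η, wordAct S.θ (sigmaW α hα m) (X ⊓ A) ∈ η}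
    with hMdef
  -- forced words for elements below A escaping H
  have hforced : ∀ (β : List L) (C : B), C ≤ A → wordAct S.θ β C ∉ H →
      β = sigmaW α hα β.length ∧
      qle H (wordAct S.θ β C) (wordAct S.θ (α.take (posOf α.length β.length)) A) := by
    intro β C hC hβ
    have hq0 := qle_pos_zero hI hcyc hC
    obtain ⟨hget, hqle⟩ := track_lemma hα hI hHer hcyc hnoex β 0 C hβ hq0
    constructor
    · refine List.ext_getElem (by rw [sigmaW_length]) ?_
      intro j h1 h2
      rw [sigmaW_getElem]
      simpa using hget j h1
    · simpa using hqle
  -- periodicity from returns into η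
  have hper : ∀ (m : ℕ) (C : B), C ≤ A → wordAct S.θ (sigmaW α hα m) C ∈ η →
      ∀ j, sLetter α hα (j + m) = sLetter α hα j := by
    intro m C hC hm j
    have hmH : wordAct S.θ (sigmaW α hα m) C ∉ H := hdisj _ hm
    have h2 := (hforced (sigmaW α hα m) C hC hmH).2
    rw [sigmaW_length] at h2
    set D := wordAct S.θ (sigmaW α hα m) C ⊓ A with hD
    have hDη : D ∈ η := uf_inf hη hm hA
    have hDH : D ∉ H := hdisj _ hDη
    have hq1 : qle H D (wordAct S.θ (α.take (posOf α.length m)) A) := qle_mono inf_le_left h2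
    have hq2 : qle H D (wordAct S.θ (α.take (posOf α.length 0)) A) :=
      qle_pos_zero hI hcyc inf_le_right
    have := track2_lemma hα hI hHer hcyc hnoex j m 0 D hDH hq1 hq2
    simpa [Nat.add_comm] using this
  have hnM : α.length ∈ Mstar := by
    refine ⟨hn, ?_⟩
    intro X hX
    rw [sigmaW_self]
    exact halpha X hX
  have hPerOf : ∀ m ∈ Mstar, ∀ j, sLetter α hα (j + m) = sLetter α hα j := by
    intro m hm j
    refine hper m A le_rfl ?_ j
    have := hm.2 A hA
    rwa [inf_idem] at this
  have hadd : ∀ m ∈ Mstar, ∀ m' ∈ Mstar, m + m' ∈ Mstar := by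
    intro m hm m' hm'
    refine ⟨by have := hm.1; omega, ?_⟩
    intro X hX
    have h1 : wordAct S.θ (sigmaW α hα m) (X ⊓ A) ∈ η := hm.2 X hX
    have h2 := hm'.2 _ h1
    have h3 : wordAct S.θ (sigmaW α hα m') (wordAct S.θ (sigmaW α hα m) (X ⊓ A)) ∈ η :=
      uf_upward hη h2 (wordAct_mono S _ inf_le_left)
    rw [sigmaW_append hα (hPerOf m hm), wordAct_append]
    exact h3
  have hcons : ∀ m ∈ Mstar, ∀ V : B, wordAct S.θ (sigmaW α hα m) V ∈ η → V ∈ η := by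
    intro m hm V hV
    by_contra hV'
    obtain ⟨e, he, heH⟩ := hmaxp V hV'
    have h1 : wordAct S.θ (sigmaW α hα m) (e ⊓ V) ∈ H := hered_word S hHer heH _
    have h3 : wordAct S.θ (sigmaW α hα m) e ∈ η :=
      uf_upward hη (hm.2 e he) (wordAct_mono S _ inf_le_left)
    have h4 := uf_inf hη h3 hV
    rw [← wordAct_inf] at h4
    exact hdisj _ h4 h1
  have hMne : Mstar.Nonempty := ⟨α.length, hnM⟩
  set d := sInf Mstar with hddef
  have hdM : d ∈ Mstar := Nat.sInf_mem hMne
  have hdmin : ∀ r, r < d → r ∉ Mstar := fun r hr => Nat.notMem_of_lt_sInf hr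
  have hdpos : 0 < d := hdM.1
  have hPerd := hPerOf d hdM
  have hmul : ∀ q : ℕ, 0 < q → q * d ∈ Mstar := by
    intro q hq
    induction q with
    | zero => omega
    | succ q ih =>
      by_cases hq0 : q = 0
      · subst hq0; simpa using hdM
      · have := hadd _ (ih (by omega)) _ hdM
        have heq : q * d + d = (q + 1) * d := by ring
        rwa [heq] at this
  -- choice of bad witnesses for short lengths
  have hXr : ∀ r : ℕ, ∃ Xr : B, Xr ∈ η ∧
      (1 ≤ r → r < d → wordAct S.θ (sigmaW α hα r) (Xr ⊓ A) ∉ η) := by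
    intro r
    by_cases h : ∃ X ∈ η, wordAct S.θ (sigmaW α hα r) (X ⊓ A) ∉ η
    · obtain ⟨X, hX1, hX2⟩ := h
      exact ⟨X, hX1, fun _ _ => hX2⟩
    · push_neg at h
      refine ⟨A, hA, fun h1 h2 => absurd (⟨h1, h⟩ : r ∈ Mstar) (hdmin r h2)⟩
  choose f hf1 hf2 using hXr
  set A' := (List.range d).foldr (fun r acc => f r ⊓ acc) A with hA'def
  have hA'η : A' ∈ η := by
    rw [hA'def]
    generalize List.range d = l
    induction l with
    | nil => exact hA
    | cons r l ih => exact uf_inf hη (hf1 r) ih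
  have hA'A : A' ≤ A := by
    rw [hA'def]
    generalize List.range d = l
    induction l with
    | nil => exact le_rfl
    | cons r l ih => exact le_trans inf_le_right ih
  have hA'f : ∀ r, r < d → A' ≤ f r := by
    have key : ∀ (l : List ℕ) (r : ℕ), r ∈ l → l.foldr (fun r acc => f r ⊓ acc) A ≤ f r := by
      intro l
      induction l with
      | nil => simp
      | cons x l ih =>
        intro r hr
        rcases List.mem_cons.1 hr with rfl | hr'
        · exact inf_le_left
        · exact le_trans inf_le_right (ih r hr')
    intro r hr
    rw [hA'def]
    exact key _ r (List.mem_range.2 hr)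
  have hshort : ∀ r, 1 ≤ r → r < d → ∀ C : B, C ≤ A' → wordAct S.θ (sigmaW α hα r) C ∉ η := by
    intro r h1 h2 C hC hCη
    have h3 : wordAct S.θ (sigmaW α hα r) (f r ⊓ A) ∈ η :=
      uf_upward hη hCη (wordAct_mono S _ (le_inf (le_trans hC (hA'f r h2)) (le_trans hC hA'A)))
    exact hf2 r h1 h2 h3
  have hmain : ∀ m : ℕ, 0 < m → ∀ C : B, C ≤ A' → wordAct S.θ (sigmaW α hα m) C ∈ η →
      d ∣ m ∧ C ∈ η := by
    intro m hm C hC hCη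
    have hCA : C ≤ A := le_trans hC hA'A
    have hPerm := hper m C hCA hCη
    obtain ⟨q, r, hmr, hrd⟩ : ∃ q r, m = q * d + r ∧ r < d := by
      refine ⟨m / d, m % d, ?_, Nat.mod_lt _ hdpos⟩
      rw [Nat.mul_comm]
      exact (Nat.div_add_mod m d).symm
    have hqd := per_mul hα hPerd q
    have hPerr := per_sub hα hPerm hqd hmr
    have hsplit : sigmaW α hα m = sigmaW α hα r ++ sigmaW α hα (q * d) := by
      rw [← sigmaW_append hα hPerr]
      congr 1
      rw [hmr]; ring
    by_cases hr0 : r = 0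
    · subst hr0
      have hq1 : 0 < q := by
        rcases Nat.eq_zero_or_pos q with rfl | h
        · simp at hmr; omega
        · exact h
      refine ⟨⟨q, by rw [hmr, Nat.add_zero, Nat.mul_comm]⟩, ?_⟩
      refine hcons _ (hmul _ hq1) C ?_
      have heq : sigmaW α hα m = sigmaW α hα (q * d) := by
        rw [hsplit, sigmaW_zero, List.nil_append]
      rwa [← heq]
    · exfalso
      by_cases hq0 : q = 0
      · subst hq0
        have hmeq : m = r := by simpa using hmr
        exact hshort r (by omega) hrd C hC (by rwa [← hmeq])
      · have hqd' : q * d ∈ Mstar := hmul _ (by omega)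
        have h5 : wordAct S.θ (sigmaW α hα (q * d)) (wordAct S.θ (sigmaW α hα r) C) ∈ η := by
          rw [← wordAct_append, ← hsplit]
          exact hCη
        have h6 := hcons _ hqd' _ h5
        exact hshort r (by omega) hrd C hC h6
  refine ⟨sigmaW α hα d, η, A', ⟨?_, hη, ?_⟩, hA'η, ?_⟩
  · intro h
    have := congrArg List.length h
    rw [sigmaW_length] at this
    simp at this
    omega
  · intro X hX
    exact uf_upward hη (hdM.2 X hX) (wordAct_mono S _ inf_le_left)
  · intro β hβ C hC hCη
    have hβH : wordAct S.θ β C ∉ H := hdisj _ hCη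
    have hfeq := (hforced β C (le_trans hC hA'A) hβH).1
    have hlen : 0 < β.length := List.length_pos_iff.2 hβ
    obtain ⟨⟨k, hk⟩, hCη'⟩ := hmain β.length hlen C hC (by rwa [← hfeq])
    have hk0 : 0 < k := by
      rcases Nat.eq_zero_or_pos k with rfl | h
      · rw [Nat.mul_zero] at hk; omega
      · exact h
    refine ⟨hCη', k, hk0, ?_⟩
    rw [sigmaW_pow hα hPerd k, hfeq, hk]
    congr 1
    ring

end Final
/-- A Boolean dynamical system `(B, L, θ)` satisfies Condition (K) if and only if
it has no cyclic maximal tails, and if and only if for every hereditary saturated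
ideal `H` of `B` the quotient `(B/H, L, θ)` satisfies Condition (L). -/
theorem conditionK_iff {B L : Type*} [GeneralizedBooleanAlgebra B]
    (S : BoolDynSys B L) :
    (ConditionK S ↔ ¬ ∃ T : Set B, IsCyclicMaximalTail S T) ∧
    (ConditionK S ↔ ∀ H : Set B, IsBoolIdeal H → IsHereditary S H →
      IsSaturated S H → QConditionL S H) := by
  constructor
  · constructor
    · rintro hK ⟨T, hT, α, η, A, huf, hTeq, hA, hprop⟩
      exact hK ⟨α, η, A, huf, hA, hprop⟩
    · intro hnoT hEx
      obtain ⟨α, η, A, huf, hA, hprop⟩ := hEx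
      exact hnoT ⟨tailOf S η, Kviol_cyclicTail huf hA hprop⟩
  · constructor
    · intro hK H hI hHer _hSat α A hcyc
      by_contra hnoex
      exact hK (noexit_gives_Kviol hI hHer hcyc hnoex)
    · intro hall hEx
      obtain ⟨α, η, A, huf, hA, hprop⟩ := hEx
      have h1 := hall (Hof S η) (Hof_ideal S huf) (Hof_hered S) (Hof_sat S huf)
      exact Kviol_noexit huf hA hprop (h1 α A (Kviol_qcycle huf hA hprop))
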